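/- In the setup of the no-ghosts lemma, suppose the inductive hypothesis π(I_j) = H_j holds for all j ≤ k−1. Then every heir H_j with j ≤ k−1 has no ghosts; equivalently, H_j = [j, j+1] is a trivial interval for all j ≤ k−1. -/
import Mathlib


/-- Step 1 of the inductive argument: if `π(I_j) = H_j` for all (1-indexed)
`j ≤ k - 1` (i.e. 0-indexed `j` with `j + 2 ≤ k`), then every heir `H_j` with
`j ≤ k - 1` has no ghosts, and equivalently `H_j = [j, j+1]` is trivial. -/
theorem existing_heirs_have_no_ghosts
    (n ℓ k : ℕ) (hn : 1 ≤ n) (hℓ : 1 ≤ ℓ) (hk : k ≤ n)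
    (a b : Fin ℓ → ℕ)
    (hab : ∀ j, a j < b j)
    (ha1 : a ⟨0, hℓ⟩ = 1)
    (hbn : b ⟨ℓ - 1, by omega⟩ = n + 1)
    (hchain : ∀ (j : Fin ℓ) (hj : (j : ℕ) + 1 < ℓ), b j = a ⟨(j : ℕ) + 1, hj⟩)
    (isGhost : ℕ → Prop)
    (hGhost : ∀ g, isGhost g ↔ ∃ j : Fin ℓ, a j < g ∧ g < b j)
    (heirOf : {g : ℕ // isGhost g} → Fin ℓ)
    (hheirOf : ∀ g : {g : ℕ // isGhost g}, a (heirOf g) < g.1 ∧ g.1 < b (heirOf g))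
    (π : Fin n ≃ (Fin ℓ ⊕ {g : ℕ // isGhost g}))
    (hHeirOrder : StrictMono fun j : Fin ℓ => π.symm (Sum.inl j))
    (hGhostCon : ∀ g : {g : ℕ // isGhost g},
      Xor'
        (g.1 ≤ (π.symm (Sum.inr g) : ℕ) + 1 ∧
          π.symm (Sum.inr g) < π.symm (Sum.inl (heirOf g)))
        (π.symm (Sum.inl (heirOf g)) < π.symm (Sum.inr g) ∧
          (π.symm (Sum.inr g) : ℕ) + 2 ≤ g.1))
    -- inductive hypothesis: π(I_j) = H_j for all j ≤ k − 1 (1-indexed)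
    (hind : ∀ j : Fin ℓ, (j : ℕ) + 2 ≤ k → (π.symm (Sum.inl j) : ℕ) = (j : ℕ)) :
    ∀ j : Fin ℓ, (j : ℕ) + 2 ≤ k →
      (a j = (j : ℕ) + 1 ∧ b j = (j : ℕ) + 2) ∧
        ∀ g : {g : ℕ // isGhost g}, heirOf g ≠ j := by
  -- one-step monotonicity of `a`
  have astep : ∀ (i : Fin ℓ) (h : (i : ℕ) + 1 < ℓ), a i < a ⟨(i : ℕ) + 1, h⟩ := by
    intro i h
    have h1 := hchain i h
    have h2 := hab i
    omega
  -- `a` is strictly monotone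
  have amono' : ∀ m : ℕ, ∀ i j : Fin ℓ, (j : ℕ) = (i : ℕ) + m + 1 → a i < a j := by
    intro m
    induction m with
    | zero =>
      intro i j hj
      have h : (i : ℕ) + 1 < ℓ := by have := j.isLt; omega
      have hje : j = ⟨(i : ℕ) + 1, h⟩ := Fin.ext (by omega : (j : ℕ) = (i : ℕ) + 1)
      rw [hje]; exact astep i h
    | succ m ih =>
      intro i j hj
      have h : (i : ℕ) + m + 1 < ℓ := by have := j.isLt; omega
      have h2 : (i : ℕ) + m + 2 < ℓ := by have := j.isLt; omega
      have ha1' : a i < a ⟨(i : ℕ) + m + 1, h⟩ := ih i ⟨(i : ℕ) + m + 1, h⟩ rfl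
      have ha2' : a (⟨(i : ℕ) + m + 1, h⟩ : Fin ℓ) < a ⟨(i : ℕ) + m + 2, h2⟩ :=
        astep ⟨(i : ℕ) + m + 1, h⟩ h2
      have hje : j = ⟨(i : ℕ) + m + 2, h2⟩ :=
        Fin.ext (by omega : (j : ℕ) = (i : ℕ) + m + 2)
      rw [hje]; omega
  have amono : StrictMono a := by
    intro i j hij
    have hij' : (i : ℕ) < (j : ℕ) := hij
    exact amono' ((j : ℕ) - (i : ℕ) - 1) i j (by omega)
  -- interiors are disjoint: `b i ≤ a j` for `i < j`
  have hdisj : ∀ i j : Fin ℓ, i < j → b i ≤ a j := by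
    intro i j hij
    have hij' : (i : ℕ) < (j : ℕ) := hij
    have hlt : (i : ℕ) + 1 < ℓ := by have := j.isLt; omega
    rw [hchain i hlt]
    rcases eq_or_lt_of_le (show (i : ℕ) + 1 ≤ (j : ℕ) from hij') with h | h
    · exact le_of_eq (congrArg a (Fin.ext (h : ((⟨(i : ℕ) + 1, hlt⟩ : Fin ℓ) : ℕ) = (j : ℕ))))
    · exact le_of_lt (amono (show (⟨(i : ℕ) + 1, hlt⟩ : Fin ℓ) < j from h))
  have hheirUniq : ∀ (g : {g : ℕ // isGhost g}) (j : Fin ℓ),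
      a j < g.1 → g.1 < b j → heirOf g = j := by
    intro g j h1 h2
    rcases lt_trichotomy (heirOf g) j with h | h | h
    · have hd := hdisj _ _ h
      have hh := (hheirOf g).2
      omega
    · exact h
    · have hd := hdisj _ _ h
      have hh := (hheirOf g).1
      omega
  -- key: if `a j = j + 1` then `b j = j + 2`
  have key : ∀ j : Fin ℓ, (j : ℕ) + 2 ≤ k → a j = (j : ℕ) + 1 → b j = (j : ℕ) + 2 := by
    intro j hjk haj
    by_contra hbj
    have hb3 : (j : ℕ) + 2 < b j := by have := hab j; omega
    have hg : isGhost ((j : ℕ) + 2) := (hGhost _).2 ⟨j, by omega, hb3⟩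
    have hheir : heirOf ⟨(j : ℕ) + 2, hg⟩ = j :=
      hheirUniq ⟨(j : ℕ) + 2, hg⟩ j (show a j < (j : ℕ) + 2 by omega) hb3
    have hcon := hGhostCon ⟨(j : ℕ) + 2, hg⟩
    rw [hheir] at hcon
    have hπj := hind j hjk
    rcases hcon with ⟨⟨h1, h2⟩, -⟩ | ⟨⟨h1, h2⟩, -⟩
    · have h1' : (j : ℕ) + 2 ≤ (π.symm (Sum.inr ⟨(j : ℕ) + 2, hg⟩) : ℕ) + 1 := h1
      have h2' : (π.symm (Sum.inr ⟨(j : ℕ) + 2, hg⟩) : ℕ) < (π.symm (Sum.inl j) : ℕ) := h2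
      omega
    · have h1' : (π.symm (Sum.inl j) : ℕ) < (π.symm (Sum.inr ⟨(j : ℕ) + 2, hg⟩) : ℕ) := h1
      have h2' : (π.symm (Sum.inr ⟨(j : ℕ) + 2, hg⟩) : ℕ) + 2 ≤ (j : ℕ) + 2 := h2
      omega
  -- main induction: `a j = j + 1`
  have main : ∀ m : ℕ, ∀ j : Fin ℓ, (j : ℕ) = m → (j : ℕ) + 2 ≤ k → a j = (j : ℕ) + 1 := by
    intro m
    induction m using Nat.strong_induction_on with
    | _ m ih =>
      intro j hjm hjk
      rcases Nat.eq_zero_or_pos m with h0 | hpos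
      · have hje : j = ⟨0, hℓ⟩ := Fin.ext (by omega : (j : ℕ) = 0)
        rw [hje, ha1]
      · obtain ⟨m', rfl⟩ : ∃ m', m = m' + 1 := ⟨m - 1, by omega⟩
        have hm' : m' < ℓ := by have := j.isLt; omega
        have hlt : m' + 1 < ℓ := by have := j.isLt; omega
        have haj' : a ⟨m', hm'⟩ = m' + 1 :=
          ih m' (by omega) ⟨m', hm'⟩ rfl (show m' + 2 ≤ k by omega)
        have hbj' : b ⟨m', hm'⟩ = m' + 2 := key ⟨m', hm'⟩ (show m' + 2 ≤ k by omega)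
          (show a ⟨m', hm'⟩ = m' + 1 from haj')
        have hje : j = (⟨m' + 1, hlt⟩ : Fin ℓ) := Fin.ext hjm
        have hstep : a j = b ⟨m', hm'⟩ := by
          rw [hchain ⟨m', hm'⟩ hlt, hje]
        show a j = (j : ℕ) + 1
        omega
  intro j hjk
  have haj : a j = (j : ℕ) + 1 := main (j : ℕ) j rfl hjk
  have hbj : b j = (j : ℕ) + 2 := key j hjk haj
  refine ⟨⟨haj, hbj⟩, ?_⟩
  intro g hgj
  have h1 := (hheirOf g).1
  have h2 := (hheirOf g).2
  rw [hgj] at h1 h2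
  omega
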